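/- Let G_a, G_b, G_c : \mathbb{N} \to \mathbb{Z}[a,b,c,q] be the sequences of polynomials defined by G_a(0) = G_b(0) = G_c(0) = 1 and, for k \ge 1, G_a(k) = G_c(k-1) + a q^k G_a(k-1), G_b(k) = G_a(k) + b q^k G_b(k-1), G_c(k) = G_b(k) + c q^k G_b(k-1). Then for every k \ge 1, the polynomial G_c(k+1) with c replaced by a b q equals (1 + a q)(1 + b q) times the polynomial G_b(k) with a, b, c replaced by a q, b q, a b q^3 respectively. -/
import Mathlib


open MvPolynomial

/-- The polynomial ring `ℤ[a,b,c,q]`. -/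
noncomputable abbrev R4 : Type := MvPolynomial (Fin 4) ℤ

noncomputable def va : R4 := X 0
noncomputable def vb : R4 := X 1
noncomputable def vc : R4 := X 2
noncomputable def vq : R4 := X 3

/-- The substitution homomorphism `a ↦ a, b ↦ b, c ↦ a b q, q ↦ q` on `ℤ[a,b,c,q]`. -/
noncomputable def substC : R4 →ₐ[ℤ] R4 := aeval ![va, vb, va * vb * vq, vq]

/-- The substitution homomorphism `a ↦ a q, b ↦ b q, c ↦ a b q³, q ↦ q` on `ℤ[a,b,c,q]`. -/
noncomputable def substQ : R4 →ₐ[ℤ] R4 := aeval ![va * vq, vb * vq, va * vb * vq ^ 3, vq]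

lemma sca : substC va = va := by simp [substC, va]
lemma scb : substC vb = vb := by simp [substC, vb]
lemma scc : substC vc = va * vb * vq := by simp [substC, vc]
lemma scq : substC vq = vq := by simp [substC, vq]
lemma sqa : substQ va = va * vq := by simp [substQ, va]
lemma sqb : substQ vb = vb * vq := by simp [substQ, vb]
lemma sqc : substQ vc = va * vb * vq ^ 3 := by simp [substQ, vc]
lemma sqq : substQ vq = vq := by simp [substQ, vq]

/-- Weighted-words functional relation (Alladi–Gordon/Schur setting): with `Ga, Gb, Gc`
as usual, for every `k ≥ 1`,
`Gc (k+1) [c ↦ a b q] = (1 + a q)(1 + b q) · Gb k [a ↦ a q, b ↦ b q, c ↦ a b q³]`. -/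
theorem Gc_Gb_functional_relation (Ga Gb Gc : ℕ → R4)
    (ha0 : Ga 0 = 1) (hb0 : Gb 0 = 1) (hc0 : Gc 0 = 1)
    (ha : ∀ k : ℕ, Ga (k + 1) = Gc k + va * vq ^ (k + 1) * Ga k)
    (hb : ∀ k : ℕ, Gb (k + 1) = Ga (k + 1) + vb * vq ^ (k + 1) * Gb k)
    (hc : ∀ k : ℕ, Gc (k + 1) = Gb (k + 1) + vc * vq ^ (k + 1) * Gb k) :
    ∀ k : ℕ, 1 ≤ k →
      substC (Gc (k + 1)) = (1 + va * vq) * (1 + vb * vq) * substQ (Gb k) := by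
  -- the second-order recurrence for Gb
  have hrec : ∀ k : ℕ, Gb (k + 2) =
      (1 + (va + vb) * vq ^ (k + 2)) * Gb (k + 1)
        + (vc - va * vb * vq ^ (k + 2)) * vq ^ (k + 1) * Gb k := by
    intro k
    linear_combination hb (k + 1) + ha (k + 1) + hc k - va * vq ^ (k + 2) * hb k
  -- substC (resp. substQ) applied to the recurrence
  have hrecC : ∀ k : ℕ, substC (Gb (k + 2)) =
      (1 + (va + vb) * vq ^ (k + 2)) * substC (Gb (k + 1))
        + (va * vb * vq - va * vb * vq ^ (k + 2)) * vq ^ (k + 1) * substC (Gb k) := by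
    intro k
    have h := congrArg substC (hrec k)
    simpa only [map_add, map_mul, map_sub, map_pow, map_one, sca, scb, scc, scq] using h
  have hrecQ : ∀ k : ℕ, substQ (Gb (k + 2)) =
      (1 + (va * vq + vb * vq) * vq ^ (k + 2)) * substQ (Gb (k + 1))
        + (va * vb * vq ^ 3 - va * vq * (vb * vq) * vq ^ (k + 2)) * vq ^ (k + 1)
          * substQ (Gb k) := by
    intro k
    have h := congrArg substQ (hrec k)
    simpa only [map_add, map_mul, map_sub, map_pow, map_one, sqa, sqb, sqc, sqq] using h
  have g1 : Gb 1 = 1 + va * vq + vb * vq := by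
    have h := hb 0
    rw [ha 0, ha0, hb0, hc0] at h
    rw [h]; ring
  -- the key identity, valid for all k ≥ 0
  have key : ∀ k : ℕ, substC (Gb (k + 1)) + va * vb * vq ^ (k + 2) * substC (Gb k)
      = (1 + va * vq) * (1 + vb * vq) * substQ (Gb k) := by
    have step : ∀ k : ℕ,
        (substC (Gb (k + 1)) + va * vb * vq ^ (k + 2) * substC (Gb k)
          = (1 + va * vq) * (1 + vb * vq) * substQ (Gb k)) →
        (substC (Gb (k + 2)) + va * vb * vq ^ (k + 3) * substC (Gb (k + 1))
          = (1 + va * vq) * (1 + vb * vq) * substQ (Gb (k + 1))) →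
        substC (Gb (k + 3)) + va * vb * vq ^ (k + 4) * substC (Gb (k + 2))
          = (1 + va * vq) * (1 + vb * vq) * substQ (Gb (k + 2)) := by
      intro k ih0 ih1
      have rc1 := hrecC (k + 1)
      have rc0 := hrecC k
      have rq := hrecQ k
      linear_combination rc1 + va * vb * vq ^ (k + 4) * rc0
        - (1 + va * vq) * (1 + vb * vq) * rq
        + (1 + (va + vb) * vq ^ (k + 3)) * ih1
        + (va * vb * vq ^ 3 - va * vb * vq ^ (k + 4)) * vq ^ (k + 1) * ih0
    have base0 : substC (Gb 1) + va * vb * vq ^ 2 * substC (Gb 0)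
        = (1 + va * vq) * (1 + vb * vq) * substQ (Gb 0) := by
      rw [g1, hb0]
      simp only [map_add, map_mul, map_one, sca, scb, scq]
      ring
    have base1 : substC (Gb 2) + va * vb * vq ^ 3 * substC (Gb 1)
        = (1 + va * vq) * (1 + vb * vq) * substQ (Gb 1) := by
      have g2 := hrec 0
      rw [g1, hb0] at g2
      rw [g2, g1]
      simp only [map_add, map_mul, map_sub, map_pow, map_one,
        sca, scb, scc, scq, sqa, sqb, sqc, sqq]
      ring
    intro k
    induction k using Nat.twoStepInduction with
    | zero => exact base0
    | one => exact base1
    | more k ih0 ih1 => exact step k ih0 ih1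
  intro k _
  have h := congrArg substC (hc k)
  simp only [map_add, map_mul, map_pow, sca, scb, scc, scq] at h
  rw [h]
  linear_combination key k
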